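/- There exists an infinite sequence G₀, G₁, G₂, … of finite directed graphs (say G_i has vertex set Fin(m_i) and edge relation E_i ⊆ Fin(m_i) × Fin(m_i)) such that: (1) no G_i contains a directed path of length 2, i.e., there are no vertices a, b, c with E_i(a, b) and E_i(b, c); and (2) for all i < j there is no injective map f : Fin(m_i) → Fin(m_j) with E_i(u, v) implying E_j(f(u), f(v)). Consequently, the subgraph ordering is not a well-quasi-order on the class of finite directed graphs with bounded directed path length. -/

import Mathlib

lemma val_add_one {M : ℕ} [NeZero M] (h2 : 2 ≤ M) (a : Fin M) :
    (a + 1).val = if a.val + 1 = M then 0 else a.val + 1 := by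
  have h1 : (1 : Fin M).val = 1 := by rw [Fin.val_one' M, Nat.mod_eq_of_lt (by omega)]
  have ha := a.isLt
  have h : (a + 1).val = (a.val + (1 : Fin M).val) % M := by rw [Fin.add_def]
  rw [h1] at h
  split
  · next heq => rw [h, heq, Nat.mod_self]
  · next hne => rw [h, Nat.mod_eq_of_lt (by omega)]

lemma val_sub_one {M : ℕ} [NeZero M] (h2 : 2 ≤ M) (a : Fin M) :
    (a - 1).val = if a.val = 0 then M - 1 else a.val - 1 := by
  have h1 : (1 : Fin M).val = 1 := by rw [Fin.val_one' M, Nat.mod_eq_of_lt (by omega)]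
  have ha := a.isLt
  have h : (a - 1).val = (M - (1 : Fin M).val + a.val) % M := by rw [Fin.sub_def]
  rw [h1] at h
  split
  · next heq => rw [h, heq, Nat.add_zero, Nat.mod_eq_of_lt (by omega)]
  · next hne =>
      rw [h]
      have : M - 1 + a.val = M + (a.val - 1) := by omega
      rw [this, Nat.add_mod_left, Nat.mod_eq_of_lt (by omega)]

lemma par_add {M : ℕ} [NeZero M] (h2 : 2 ≤ M) (a : Fin M) (hME : M % 2 = 0) :
    (a + 1).val % 2 = (a.val + 1) % 2 := by
  have h := val_add_one h2 a
  have ha := a.isLt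
  split at h <;> omega

lemma par_sub {M : ℕ} [NeZero M] (h2 : 2 ≤ M) (a : Fin M) (hME : M % 2 = 0) :
    (a - 1).val % 2 = (a.val + 1) % 2 := by
  have h := val_sub_one h2 a
  have ha := a.isLt
  split at h <;> omega

lemma mk_add_one {M : ℕ} [NeZero M] (h2 : 2 ≤ M) (t : ℕ) (ht : t + 1 < M) :
    (⟨t, by omega⟩ : Fin M) + 1 = ⟨t + 1, ht⟩ := by
  apply Fin.ext
  rw [val_add_one h2]
  simp only
  rw [if_neg (by omega)]

lemma last_add_one {M : ℕ} [NeZero M] (h2 : 2 ≤ M) :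
    (⟨M - 1, by omega⟩ : Fin M) + 1 = 0 := by
  apply Fin.ext
  rw [val_add_one h2]
  simp only [Fin.val_zero]
  rw [if_pos (by omega)]

open Fin.NatCast in
lemma key {M N : ℕ} [NeZero M] [NeZero N] (hM4 : 4 ≤ M) (hME : M % 2 = 0)
    (hN4 : 4 ≤ N) (hNE : N % 2 = 0) (hMN : M < N)
    (f : Fin M → Fin N) (hinj : Function.Injective f)
    (hpres : ∀ u v : Fin M, (Even u.val ∧ (v = u + 1 ∨ v = u - 1)) →
      (Even (f u).val ∧ (f v = f u + 1 ∨ f v = f u - 1))) : False := by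
  have h2M : 2 ≤ M := by omega
  have h2N : 2 ≤ N := by omega
  -- every consecutive pair of images differs by ±1
  have step : ∀ k : Fin M, f (k + 1) = f k + 1 ∨ f (k + 1) = f k - 1 := by
    intro k
    by_cases hk : Even k.val
    · exact (hpres k (k + 1) ⟨hk, Or.inl rfl⟩).2
    · have hk1 : Even (k + 1).val := by
        rw [Nat.even_iff] at hk ⊢
        have := par_add h2M k hME
        omega
      have hke : k = (k + 1) - 1 := by rw [add_sub_cancel_right]
      have h := (hpres (k + 1) k ⟨hk1, Or.inr hke⟩).2
      rcases h with h | h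
      · right; rw [h]; rw [add_sub_cancel_right]
      · left; rw [h]; rw [sub_add_cancel]
  -- f (k+2) ≠ f k
  have noswitch : ∀ k : Fin M, f (k + 1 + 1) ≠ f k := by
    intro k h
    have hk : k + 1 + 1 = k := hinj h
    rw [add_assoc] at hk
    have h11 : (1 + 1 : Fin M) = 0 := add_eq_left.mp hk
    have hv : ((1 : Fin M) + 1).val = 2 := by
      rw [val_add_one h2M]
      have h1 : (1 : Fin M).val = 1 := by rw [Fin.val_one' M, Nat.mod_eq_of_lt (by omega)]
      rw [h1, if_neg (by omega)]
    rw [h11, Fin.val_zero] at hv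
    omega
  set D : Fin M → Prop := fun k => f (k + 1) = f k + 1 with hD
  have hDsucc : ∀ k : Fin M, D k ↔ D (k + 1) := by
    intro k
    constructor
    · intro hDk
      by_contra hnk
      have h := (step (k + 1)).resolve_left hnk
      rw [hDk, add_sub_cancel_right] at h
      exact noswitch k h
    · intro hDk1
      by_contra hnk
      have h' := (step k).resolve_left hnk
      have h : f (k + 1 + 1) = f k := by rw [hDk1, h', sub_add_cancel]
      exact noswitch k h
  have hconstAux : ∀ t : ℕ, ∀ ht : t < M, (D ⟨t, ht⟩ ↔ D 0) := by
    intro t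
    induction t with
    | zero => intro ht; have : (⟨0, ht⟩ : Fin M) = 0 := Fin.ext (by simp)
              rw [this]
    | succ s ih =>
        intro ht
        have hs : s < M := by omega
        rw [← mk_add_one h2M s ht]
        exact (hDsucc ⟨s, hs⟩).symm.trans (ih hs)
  have hconst : ∀ k : Fin M, D k ↔ D 0 := by
    intro k
    have := hconstAux k.val k.isLt
    simpa [Fin.eta] using this
  have hcastM : ((M : ℕ) : Fin N) = ((M - 1 : ℕ) : Fin N) + 1 := by
    have h : ((M : ℕ) : Fin N) = (((M - 1) + 1 : ℕ) : Fin N) := by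
      congr 1
      omega
    rw [h, Nat.cast_add, Nat.cast_one]
  have hMne : ((M : ℕ) : Fin N) ≠ 0 := by
    intro h
    have := congrArg Fin.val h
    rw [Fin.val_natCast, Fin.val_zero, Nat.mod_eq_of_lt hMN] at this
    omega
  by_cases hD0 : D 0
  · have hall : ∀ k : Fin M, f (k + 1) = f k + 1 := fun k => (hconst k).mpr hD0
    have htel : ∀ t : ℕ, ∀ ht : t < M, f ⟨t, ht⟩ = f 0 + (t : Fin N) := by
      intro t
      induction t with
      | zero => intro ht
                have : (⟨0, ht⟩ : Fin M) = 0 := Fin.ext (by simp)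
                rw [this, Nat.cast_zero, add_zero]
      | succ s ih =>
          intro ht
          have hs : s < M := by omega
          rw [← mk_add_one h2M s ht, hall ⟨s, hs⟩, ih hs, Nat.cast_add, Nat.cast_one, add_assoc]
    have hw : f 0 = f ⟨M - 1, by omega⟩ + 1 := by
      rw [← hall ⟨M - 1, by omega⟩, last_add_one h2M]
    rw [htel (M - 1) (by omega), add_assoc] at hw
    have := add_eq_left.mp hw.symm
    rw [← hcastM] at this
    exact hMne this
  · have hall : ∀ k : Fin M, f (k + 1) = f k - 1 :=
      fun k => (step k).resolve_left (fun h => hD0 ((hconst k).mp h))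
    have htel : ∀ t : ℕ, ∀ ht : t < M, f ⟨t, ht⟩ = f 0 - (t : Fin N) := by
      intro t
      induction t with
      | zero => intro ht
                have : (⟨0, ht⟩ : Fin M) = 0 := Fin.ext (by simp)
                rw [this, Nat.cast_zero, sub_zero]
      | succ s ih =>
          intro ht
          have hs : s < M := by omega
          rw [← mk_add_one h2M s ht, hall ⟨s, hs⟩, ih hs, Nat.cast_add, Nat.cast_one, sub_sub]
    have hw : f 0 = f ⟨M - 1, by omega⟩ - 1 := by
      rw [← hall ⟨M - 1, by omega⟩, last_add_one h2M]
    rw [htel (M - 1) (by omega), sub_sub] at hw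
    have := sub_eq_self.mp hw.symm
    rw [← hcastM] at this
    exact hMne this


/-- there is an infinite antichain (for the subgraph ordering) of finite
directed graphs without directed paths of length 2; hence the subgraph ordering is not a
wqo on finite directed graphs with bounded directed path length. -/
theorem stmt_12 :
    ∃ (m : ℕ → ℕ) (E : ∀ i : ℕ, Fin (m i) → Fin (m i) → Prop),
      (∀ i : ℕ, ¬ ∃ a b c : Fin (m i), E i a b ∧ E i b c) ∧
      (∀ i j : ℕ, i < j →
        ¬ ∃ f : Fin (m i) → Fin (m j), Function.Injective f ∧
            ∀ u v : Fin (m i), E i u v → E j (f u) (f v)) := by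
  refine ⟨fun i => 2 * i + 4,
    fun i a b => Even a.val ∧ (b = a + 1 ∨ b = a - 1), ?_, ?_⟩
  · intro i
    dsimp only
    rintro ⟨a, b, c, ⟨ha, hb⟩, ⟨hbe, -⟩⟩
    haveI : NeZero (2 * i + 4) := ⟨by omega⟩
    have h2 : 2 ≤ 2 * i + 4 := by omega
    have hME : (2 * i + 4) % 2 = 0 := by omega
    rw [Nat.even_iff] at ha hbe
    rcases hb with rfl | rfl
    · have := par_add h2 a hME; omega
    · have := par_sub h2 a hME; omega
  · intro i j hij
    dsimp only
    rintro ⟨f, hinj, hpres⟩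
    haveI : NeZero (2 * i + 4) := ⟨by omega⟩
    haveI : NeZero (2 * j + 4) := ⟨by omega⟩
    exact key (by omega) (by omega) (by omega) (by omega) (by omega) f hinj hpres
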